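/- Let G be a chordal graph (every bag of a given tree decomposition induces a clique), x a node of a tree decomposition (T, 𝓑) with parent y, and G_x the union of bags in the subtree rooted at x. If 𝓗 is a non-piercing family of connected subgraphs of G, then the family {G[V(H) ∩ V(G_x)] : H ∈ 𝓗, V(H) ∩ V(G_x) ≠ ∅} is a non-piercing family of connected subgraphs of G_x. -/

import Mathlib

open scoped ENNReal

/-- A tree decomposition of a graph `G`: a tree `T` with bags `bag i ⊆ V` such that
every vertex appears in a bag, every edge lies in a bag, and the bags containing a
fixed vertex form a connected subtree. -/
def IsTreeDecomp {V ι : Type} (G : SimpleGraph V) (T : SimpleGraph ι) (bag : ι → Set V) : Prop :=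
  T.IsTree ∧ (∀ v, ∃ i, v ∈ bag i) ∧
    (∀ u v, G.Adj u v → ∃ i, u ∈ bag i ∧ v ∈ bag i) ∧
    (∀ v, (T.induce {i | v ∈ bag i}).Connected)

/-- Width of a tree decomposition: (max bag size) − 1. -/
noncomputable def decompWidth {V ι : Type} (bag : ι → Set V) : ℕ∞ :=
  (⨆ i, (bag i).encard) - 1

/-- Treewidth: the infimum of widths of tree decompositions. -/
noncomputable def treewidth {V : Type} (G : SimpleGraph V) : ℕ∞ :=
  sInf {w : ℕ∞ | ∃ (ι : Type) (T : SimpleGraph ι) (bag : ι → Set V),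
    IsTreeDecomp G T bag ∧ w = decompWidth bag}

/-- A family of vertex sets is non-piercing in `G` if every pairwise difference
(when nonempty) induces a connected subgraph of `G`. -/
def NonPiercing {V : Type} (G : SimpleGraph V) (F : Set (Set V)) : Prop :=
  ∀ H ∈ F, ∀ H' ∈ F, (H \ H').Nonempty → (G.induce (H \ H')).Connected

/-- Outerplanarity via a one-page (circular, non-crossing) layout. -/
def Outerplanar {α : Type} (Q : SimpleGraph α) : Prop :=
  ∃ f : α → ℕ, Function.Injective f ∧
    ∀ a b c d : α, Q.Adj a b → Q.Adj c d →
      ¬ (f a < f c ∧ f c < f b ∧ f b < f d)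

/-- `a, b, c` appear in this (clockwise) cyclic order on the cycle `Fin n`. -/
def Cyc3 {n : ℕ} (a b c : Fin n) : Prop :=
  (a < b ∧ b < c) ∨ (b < c ∧ c < a) ∨ (c < a ∧ a < b)

/-- `a, b, c, d` appear in this (clockwise) cyclic order on the cycle `Fin n`. -/
def Cyc4 {n : ℕ} (a b c d : Fin n) : Prop :=
  (a < b ∧ b < c ∧ c < d) ∨ (b < c ∧ c < d ∧ d < a) ∨
    (c < d ∧ d < a ∧ a < b) ∨ (d < a ∧ a < b ∧ b < c)

/-- Open arc of vertices strictly between `u` and `v` clockwise. -/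
def arcO {n : ℕ} (u v : Fin n) : Set (Fin n) := {w | Cyc3 u w v}

/-- Closed arc of vertices from `u` to `v` clockwise (inclusive). -/
def arcC {n : ℕ} (u v : Fin n) : Set (Fin n) := {u} ∪ {v} ∪ {w | Cyc3 u w v}

/-- The cycle system is `axax`-free. -/
def AxaxFree {n : ℕ} (F : Set (Set (Fin n))) : Prop :=
  ¬ ∃ H ∈ F, ∃ H' ∈ F, ∃ a₁ x₁ a₂ x₂ : Fin n,
    Cyc4 a₁ x₁ a₂ x₂ ∧ a₁ ∈ H \ H' ∧ a₂ ∈ H \ H' ∧ x₁ ∈ H' ∧ x₂ ∈ H'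

/-- The cycle system is `abab`-free. -/
def AbabFree {n : ℕ} (F : Set (Set (Fin n))) : Prop :=
  ¬ ∃ H ∈ F, ∃ H' ∈ F, ∃ a₁ b₁ a₂ b₂ : Fin n,
    Cyc4 a₁ b₁ a₂ b₂ ∧ a₁ ∈ H \ H' ∧ a₂ ∈ H \ H' ∧ b₁ ∈ H' \ H ∧ b₂ ∈ H' \ H

/-- The vertices appearing in bags of the component of `T` minus the edge `{x,y}`
that contains `x` (the `x`-side of the tree decomposition). -/
def sideVerts {V ι : Type} (T : SimpleGraph ι) (bag : ι → Set V) (x y : ι) : Set V :=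
  ⋃ i ∈ {i | (T.deleteEdges {s(x, y)}).Reachable x i}, bag i

/-- Adjacency in the `N × N` grid graph. -/
def gridAdj {N : ℕ} (p q : Fin N × Fin N) : Prop :=
  (p.1 = q.1 ∧ (p.2.val + 1 = q.2.val ∨ q.2.val + 1 = p.2.val)) ∨
    (p.2 = q.2 ∧ (p.1.val + 1 = q.1.val ∨ q.1.val + 1 = p.1.val))

/-- Clockwise distance from `b` to `a` on the cycle `Fin n`. -/
def relpos {n : ℕ} (a b : Fin n) : ℕ := (a.val + n - b.val) % n

/-- Lexicographic comparison on pairs of naturals. -/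
def lexLe (p q : ℕ × ℕ) : Prop := p.1 < q.1 ∨ (p.1 = q.1 ∧ p.2 ≤ q.2)

/-- A set of indices forming a (possibly empty) cyclic interval of `Fin m`. -/
def CycInterval {m : ℕ} (S : Set (Fin m)) : Prop := S = ∅ ∨ ∃ i j : Fin m, S = arcC i j

/-- Maximal elements of a family of sets under inclusion. -/
def maxElems {X : Type} (F : Set (Set X)) : Set (Set X) :=
  {H ∈ F | ∀ H' ∈ F, H ⊆ H' → H = H'}

section AuxNP
open SimpleGraph

lemma walk_cross {ι : Type} {T : SimpleGraph ι} (R : Set ι) :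
    ∀ {j i : ι} (p : T.Walk j i), j ∈ R → i ∉ R →
      ∃ a b, T.Adj a b ∧ a ∈ R ∧ b ∉ R ∧ a ∈ p.support ∧ b ∈ p.support := by
  intro j i p
  induction p with
  | nil => intro h h'; exact absurd h h'
  | @cons j c i h q ih =>
    intro hj hi
    by_cases hc : c ∈ R
    · obtain ⟨a, b, hab, ha, hb, has, hbs⟩ := ih hc hi
      exact ⟨a, b, hab, ha, hb, by simp [has], by simp [hbs]⟩
    · exact ⟨j, c, h, hj, hc, by simp, by simp⟩

/-- Core rerouting lemma. -/
lemma core_walk {V : Type} (G : SimpleGraph V) (A S : Set V)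
    (hSc : S.Pairwise G.Adj)
    (hb : ∀ u v, G.Adj u v → u ∈ A → v ∉ A → u ∈ S)
    (W : Set V) :
    ∀ {a b : V} (p : G.Walk a b), (∀ v ∈ p.support, v ∈ W) → b ∈ A →
      (a ∈ A → ∃ (ha' : a ∈ W ∩ A) (hb' : b ∈ W ∩ A),
        (G.induce (W ∩ A)).Reachable ⟨a, ha'⟩ ⟨b, hb'⟩) ∧
      (a ∉ A → ∃ z, z ∈ S ∧ ∃ (hz : z ∈ W ∩ A) (hb' : b ∈ W ∩ A),
        (G.induce (W ∩ A)).Reachable ⟨z, hz⟩ ⟨b, hb'⟩) := by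
  intro a b p
  induction p with
  | nil =>
    intro hsupp hbA
    refine ⟨fun ha => ⟨⟨hsupp _ (by simp), ha⟩, ⟨hsupp _ (by simp), hbA⟩, Reachable.refl _⟩,
      fun ha => absurd hbA ha⟩
  | @cons a c b h q ih =>
    intro hsupp hbA
    have hsq : ∀ v ∈ q.support, v ∈ W := fun v hv => hsupp v (by simp [hv])
    have haW : a ∈ W := hsupp a (by simp)
    obtain ⟨ih1, ih2⟩ := ih hsq hbA
    constructor
    · intro haA
      by_cases hcA : c ∈ A
      · obtain ⟨hc', hb', r⟩ := ih1 hcA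
        by_cases hac : a = c
        · exact ⟨⟨haW, haA⟩, hb', by subst hac; exact r⟩
        · exact ⟨⟨haW, haA⟩, hb', Reachable.trans (Adj.reachable (by exact h)) r⟩
      · have haS : a ∈ S := hb a c h haA hcA
        obtain ⟨z, hzS, hz, hb', r⟩ := ih2 hcA
        refine ⟨⟨haW, haA⟩, hb', ?_⟩
        by_cases haz : a = z
        · subst haz; exact r
        · exact Reachable.trans (Adj.reachable (by exact hSc haS hzS haz)) r
    · intro haA
      by_cases hcA : c ∈ A
      · have hcS : c ∈ S := hb c a h.symm hcA haA
        obtain ⟨hc', hb', r⟩ := ih1 hcA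
        exact ⟨c, hcS, hc', hb', r⟩
      · exact ih2 hcA

lemma core_connected {V : Type} (G : SimpleGraph V) (A S : Set V)
    (hSc : S.Pairwise G.Adj)
    (hb : ∀ u v, G.Adj u v → u ∈ A → v ∉ A → u ∈ S)
    (W : Set V) (hW : (G.induce W).Connected) (hne : (W ∩ A).Nonempty) :
    (G.induce (W ∩ A)).Connected := by
  rw [connected_iff]
  refine ⟨fun u v => ?_, hne.to_subtype⟩
  obtain ⟨a, haW, haA⟩ := u
  obtain ⟨b, hbW, hbA⟩ := v
  obtain ⟨w0⟩ := hW.preconnected ⟨a, haW⟩ ⟨b, hbW⟩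
  have hsupp : ∀ v ∈ (w0.map (SimpleGraph.Embedding.induce W).toHom).support, v ∈ W := by
    intro v hv
    rw [Walk.support_map, List.mem_map] at hv
    obtain ⟨⟨v', hv'⟩, _, rfl⟩ := hv
    exact hv'
  obtain ⟨ha', hb', r⟩ := (core_walk G A S hSc hb W (w0.map (SimpleGraph.Embedding.induce W).toHom) hsupp hbA).1 haA
  exact r

lemma boundary_lem {V ι : Type} (G : SimpleGraph V) (T : SimpleGraph ι) (bag : ι → Set V)
    (hTD : IsTreeDecomp G T bag) (x y : ι) (hxy : T.Adj x y) :
    ∀ u v, G.Adj u v → u ∈ sideVerts T bag x y → v ∉ sideVerts T bag x y →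
      u ∈ bag x ∩ bag y := by
  intro u v hadj hu hv
  simp only [sideVerts, Set.mem_iUnion, Set.mem_setOf_eq, exists_prop] at hu hv
  push_neg at hv
  obtain ⟨j, hjx, hju⟩ := hu
  obtain ⟨i, hui, hvi⟩ := hTD.2.2.1 u v hadj
  have hi : ¬ (T.deleteEdges {s(x, y)}).Reachable x i := fun h => hv i h hvi
  -- walk from j to i in the subtree of bags containing u
  obtain ⟨w0⟩ := (hTD.2.2.2 u).preconnected ⟨j, hju⟩ ⟨i, hui⟩
  have hsupp : ∀ k ∈ (w0.map (SimpleGraph.Embedding.induce {k | u ∈ bag k}).toHom).support, u ∈ bag k := by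
    intro k hk
    rw [Walk.support_map, List.mem_map] at hk
    obtain ⟨⟨k', hk'⟩, _, rfl⟩ := hk
    exact hk'
  obtain ⟨a, b, hab, ha, hbR, has, hbs⟩ :=
    walk_cross {k | (T.deleteEdges {s(x, y)}).Reachable x k}
      (w0.map (SimpleGraph.Embedding.induce {k | u ∈ bag k}).toHom) hjx hi
  -- the crossing edge must be s(x,y)
  have hnadj : ¬ (T.deleteEdges {s(x, y)}).Adj a b := fun h => hbR (ha.trans h.reachable)
  have heq : s(a, b) = s(x, y) := by
    by_contra hne
    exact hnadj (SimpleGraph.deleteEdges_adj.mpr ⟨hab, by simpa using hne⟩)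
  have hbridge : ¬ (T.deleteEdges {s(x, y)}).Reachable x y := by
    have := (isAcyclic_iff_forall_adj_isBridge.mp hTD.1.IsAcyclic) hxy
    exact this
  rcases Sym2.eq_iff.mp heq with ⟨rfl, rfl⟩ | ⟨rfl, rfl⟩
  · exact ⟨hsupp _ has, hsupp _ hbs⟩
  · exact absurd ha hbridge

end AuxNP

theorem stmt7 {V ι : Type} (G : SimpleGraph V) (T : SimpleGraph ι) (bag : ι → Set V)
    (hTD : IsTreeDecomp G T bag)
    (hclique : ∀ i, (bag i).Pairwise G.Adj)
    (x y : ι) (hxy : T.Adj x y)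
    (𝓗 : Set (Set V))
    (hconn : ∀ H ∈ 𝓗, (G.induce H).Connected)
    (hnp : NonPiercing G 𝓗) :
    (∀ H ∈ 𝓗, (H ∩ sideVerts T bag x y).Nonempty →
      (G.induce (H ∩ sideVerts T bag x y)).Connected) ∧
    (∀ H ∈ 𝓗, ∀ H' ∈ 𝓗,
      ((H ∩ sideVerts T bag x y) \ (H' ∩ sideVerts T bag x y)).Nonempty →
      (G.induce ((H ∩ sideVerts T bag x y) \ (H' ∩ sideVerts T bag x y))).Connected) := by
  set A := sideVerts T bag x y with hA
  set S := bag x ∩ bag y with hS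
  have hSc : S.Pairwise G.Adj := (hclique x).mono Set.inter_subset_left
  have hbd : ∀ u v, G.Adj u v → u ∈ A → v ∉ A → u ∈ S :=
    boundary_lem G T bag hTD x y hxy
  constructor
  · intro H hH hne
    exact core_connected G A S hSc hbd H (hconn H hH) hne
  · intro H hH H' hH' hne
    have hEq : (H ∩ A) \ (H' ∩ A) = (H \ H') ∩ A := by
      ext v; simp only [Set.mem_diff, Set.mem_inter_iff]; tauto
    rw [hEq] at hne ⊢
    have hHd : (H \ H').Nonempty := ⟨hne.choose, hne.choose_spec.1⟩
    exact core_connected G A S hSc hbd (H \ H') (hnp H hH H' hH' hHd) hne
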